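/- If L₀,…,L_{μ−1} are linearly independent differential operators spanning a closed subspace Δ of Span_ℂ(𝔇) and satisfying Lᵢ(fⱼ)(x̂ₑ) = 0 for all i, j, then Lᵢ(q·fⱼ)(x̂ₑ) = 0 for every polynomial q; hence Δ ⊆ Δ_{x̂ₑ}(I) for I = (f₁,…,fₙ). -/

import Mathlib

open MvPolynomial

/-- `dEval p α f` is the value of the scaled differential operator
`D(α) = (1/α!) ∂^α` applied to `f` and evaluated at the point `p`
(equivalently, the `α`-th Taylor coefficient of `f` at `p`). -/
noncomputable def dEval {σ : Type*} [Fintype σ] [DecidableEq σ]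
    (p : σ → ℂ) (α : σ →₀ ℕ) (f : MvPolynomial σ ℂ) : ℂ :=
  MvPolynomial.coeff α
    (MvPolynomial.aeval (fun i => MvPolynomial.X i + MvPolynomial.C (p i)) f)

/-- The value at `p` on `f` of the differential operator with coefficient vector `c`,
`L = ∑ c_α D(α)`. -/
noncomputable def applyOp {σ : Type*} [Fintype σ] [DecidableEq σ]
    (c : (σ →₀ ℕ) →₀ ℂ) (p : σ → ℂ) (f : MvPolynomial σ ℂ) : ℂ :=
  Finsupp.linearCombination ℂ (fun α => dEval p α f) c

/-- The Max Noether (local dual) space of an ideal `I` at the point `p`,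
represented by the coefficient vectors of differential operators annihilating `I` at `p`. -/
noncomputable def dualSpace {σ : Type*} [Fintype σ] [DecidableEq σ]
    (p : σ → ℂ) (I : Ideal (MvPolynomial σ ℂ)) : Submodule ℂ ((σ →₀ ℕ) →₀ ℂ) :=
  ⨅ f ∈ I, LinearMap.ker (Finsupp.linearCombination ℂ (fun α => dEval p α f))

/-- The truncation of the dual space to operators of order at most `k`. -/
noncomputable def dualSpaceLe {σ : Type*} [Fintype σ] [DecidableEq σ]
    (p : σ → ℂ) (I : Ideal (MvPolynomial σ ℂ)) (k : ℕ) : Submodule ℂ ((σ →₀ ℕ) →₀ ℂ) :=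
  dualSpace p I ⊓ Finsupp.supported ℂ ℂ {α | (α.sum fun _ m => m) ≤ k}

/-- The anti-differentiation map `Φⱼ` on coefficient vectors of differential operators:
`(Φⱼ c)(β) = c(β + eⱼ)`. -/
noncomputable def shiftOp {σ : Type*} [DecidableEq σ] (j : σ)
    (c : (σ →₀ ℕ) →₀ ℂ) : (σ →₀ ℕ) →₀ ℂ :=
  Finsupp.comapDomain (fun β => β + Finsupp.single j 1) c
    ((add_left_injective _).injOn)

/-- Jacobian matrix of a polynomial system at a point. -/
noncomputable def jacMat {σ : Type*} [Fintype σ] [DecidableEq σ]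
    (F : σ → MvPolynomial σ ℂ) (p : σ → ℂ) : Matrix σ σ ℂ :=
  Matrix.of fun i j => MvPolynomial.eval p (MvPolynomial.pderiv j (F i))

section Aux

variable {σ : Type*} [Fintype σ] [DecidableEq σ] (p : σ → ℂ)

lemma dEval_add (α : σ →₀ ℕ) (g h : MvPolynomial σ ℂ) :
    dEval p α (g + h) = dEval p α g + dEval p α h := by
  simp [dEval]

lemma dEval_C_mul (α : σ →₀ ℕ) (a : ℂ) (h : MvPolynomial σ ℂ) :
    dEval p α (MvPolynomial.C a * h) = a * dEval p α h := by
  simp [dEval, coeff_C_mul]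

lemma dEval_zero (α : σ →₀ ℕ) : dEval p α 0 = 0 := by
  simp [dEval]

lemma applyOp_add_f (c : (σ →₀ ℕ) →₀ ℂ) (g h : MvPolynomial σ ℂ) :
    applyOp c p (g + h) = applyOp c p g + applyOp c p h := by
  simp [applyOp, Finsupp.linearCombination_apply, dEval_add, smul_eq_mul, mul_add,
    Finsupp.sum_add]

lemma applyOp_C_mul (c : (σ →₀ ℕ) →₀ ℂ) (a : ℂ) (h : MvPolynomial σ ℂ) :
    applyOp c p (MvPolynomial.C a * h) = a * applyOp c p h := by
  simp only [applyOp, Finsupp.linearCombination_apply, dEval_C_mul, smul_eq_mul,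
    Finsupp.mul_sum]
  exact Finsupp.sum_congr fun α _ => by ring

lemma applyOp_zero_f (c : (σ →₀ ℕ) →₀ ℂ) : applyOp c p 0 = 0 := by
  simp [applyOp, Finsupp.linearCombination_apply, dEval_zero]

lemma dEval_X_mul (α : σ →₀ ℕ) (j : σ) (h : MvPolynomial σ ℂ) :
    dEval p α (MvPolynomial.X j * h) =
      (if j ∈ α.support then dEval p (α - Finsupp.single j 1) h else 0)
        + p j * dEval p α h := by
  simp only [dEval, map_mul, aeval_X]
  rw [add_mul, coeff_add, coeff_X_mul', coeff_C_mul]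

lemma shiftOp_apply (j : σ) (c : (σ →₀ ℕ) →₀ ℂ) (β : σ →₀ ℕ) :
    shiftOp j c β = c (β + Finsupp.single j 1) := rfl

lemma shiftOp_single_of_ne (j : σ) (α : σ →₀ ℕ) (b : ℂ) (hα : α j = 0) :
    shiftOp j (Finsupp.single α b) = 0 := by
  ext γ
  rw [shiftOp_apply, Finsupp.single_apply, if_neg, Finsupp.coe_zero, Pi.zero_apply]
  intro heq
  have := congrArg (fun m : σ →₀ ℕ => m j) heq
  simp [hα] at this

lemma shiftOp_single_of_pos (j : σ) (α : σ →₀ ℕ) (b : ℂ) (hα : α j ≠ 0) :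
    shiftOp j (Finsupp.single α b) = Finsupp.single (α - Finsupp.single j 1) b := by
  have hle : Finsupp.single j 1 ≤ α := by
    intro k
    rcases eq_or_ne k j with rfl | hk
    · simpa [Finsupp.single_apply] using Nat.one_le_iff_ne_zero.mpr hα
    · simp [Finsupp.single_apply, Ne.symm hk]
  have hcancel : α - Finsupp.single j 1 + Finsupp.single j 1 = α :=
    tsub_add_cancel_of_le hle
  ext γ
  rw [shiftOp_apply, Finsupp.single_apply, Finsupp.single_apply]
  refine if_congr ?_ rfl rfl
  constructor
  · rintro rfl
    exact add_tsub_cancel_right γ _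
  · rintro rfl
    exact hcancel.symm

lemma applyOp_single (α : σ →₀ ℕ) (b : ℂ) (h : MvPolynomial σ ℂ) :
    applyOp (Finsupp.single α b) p h = b * dEval p α h := by
  simp [applyOp, Finsupp.linearCombination_single]

lemma applyOp_X_mul (j : σ) (c : (σ →₀ ℕ) →₀ ℂ) (h : MvPolynomial σ ℂ) :
    applyOp c p (MvPolynomial.X j * h) =
      applyOp (shiftOp j c) p h + p j * applyOp c p h := by
  induction c using Finsupp.induction_linear with
  | zero =>
      have : shiftOp j (0 : (σ →₀ ℕ) →₀ ℂ) = 0 := by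
        ext γ; rw [shiftOp_apply]; simp
      simp [applyOp, this]
  | add c₁ c₂ ih₁ ih₂ =>
      have hsh : shiftOp j (c₁ + c₂) = shiftOp j c₁ + shiftOp j c₂ := by
        ext γ; simp [shiftOp_apply]
      simp only [applyOp, map_add] at ih₁ ih₂ ⊢
      rw [hsh, map_add, ih₁, ih₂]; ring
  | single α b =>
      rcases eq_or_ne (α j) 0 with hα | hα
      · rw [shiftOp_single_of_ne j α b hα, applyOp_single, dEval_X_mul,
          if_neg (by simpa using hα)]
        simp [applyOp]
        ring
      · rw [shiftOp_single_of_pos j α b hα, applyOp_single, applyOp_single, applyOp_single,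
          dEval_X_mul, if_pos (by simpa using hα)]
        ring

end Aux

/-- If `L₀, …, L_{μ−1}` are linearly independent differential operators spanning a closed
subspace `Δ` and satisfying `Lᵢ(fⱼ)(x̂ₑ) = 0` for all `i, j`, then `Lᵢ(q·fⱼ)(x̂ₑ) = 0` for
every polynomial `q`; hence `Δ ⊆ Δ_{x̂ₑ}(I)` for `I = (f₁,…,fₙ)`. -/
theorem closed_subspace_le_dualSpace {n μ : ℕ}
    (f : Fin n → MvPolynomial (Fin n) ℂ) (xe : Fin n → ℂ)
    (L : Fin μ → ((Fin n →₀ ℕ) →₀ ℂ))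
    (hindep : LinearIndependent ℂ L)
    (Δ : Submodule ℂ ((Fin n →₀ ℕ) →₀ ℂ))
    (hΔ : Δ = Submodule.span ℂ (Set.range L))
    (hclosed : ∀ c ∈ Δ, ∀ j, shiftOp j c ∈ Δ)
    (hann : ∀ i j, applyOp (L i) xe (f j) = 0) :
    (∀ i j, ∀ q : MvPolynomial (Fin n) ℂ, applyOp (L i) xe (q * f j) = 0) ∧
      Δ ≤ dualSpace xe (Ideal.span (Set.range f)) := by
  have hbase : ∀ j, ∀ c ∈ Δ, applyOp c xe (f j) = 0 := by
    intro j c hc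
    have hΔle : Δ ≤ LinearMap.ker
        (Finsupp.linearCombination ℂ (fun α => dEval xe α (f j))) := by
      rw [hΔ, Submodule.span_le]
      rintro _ ⟨i, rfl⟩
      exact hann i j
    exact hΔle hc
  have hmul : ∀ (q g : MvPolynomial (Fin n) ℂ),
      (∀ c ∈ Δ, applyOp c xe g = 0) → ∀ c ∈ Δ, applyOp c xe (q * g) = 0 := by
    intro q
    induction q using MvPolynomial.induction_on with
    | C a =>
        intro g hg c hc
        rw [applyOp_C_mul, hg c hc, mul_zero]
    | add q₁ q₂ ih₁ ih₂ =>
        intro g hg c hc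
        rw [add_mul, applyOp_add_f, ih₁ g hg c hc, ih₂ g hg c hc, add_zero]
    | mul_X q j ih =>
        intro g hg c hc
        have hring : q * MvPolynomial.X j * g = MvPolynomial.X j * (q * g) := by
          ring
        rw [hring, applyOp_X_mul, ih g hg (shiftOp j c) (hclosed c hc j),
          ih g hg c hc, mul_zero, add_zero]
  have hideal : ∀ g ∈ Ideal.span (Set.range f), ∀ c ∈ Δ, applyOp c xe g = 0 := by
    let J : Ideal (MvPolynomial (Fin n) ℂ) :=
      { carrier := {g | ∀ c ∈ Δ, applyOp c xe g = 0}
        add_mem' := by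
          intro a b ha hb c hc
          rw [applyOp_add_f, ha c hc, hb c hc, add_zero]
        zero_mem' := by
          intro c hc
          exact applyOp_zero_f xe c
        smul_mem' := by
          intro r g hg
          rw [smul_eq_mul]
          exact hmul r g hg }
    have hspan : Ideal.span (Set.range f) ≤ J := by
      rw [Ideal.span_le]
      rintro _ ⟨j, rfl⟩
      exact hbase j
    intro g hg
    exact hspan hg
  constructor
  · intro i j q
    have hLiΔ : L i ∈ Δ := by
      rw [hΔ]; exact Submodule.subset_span (Set.mem_range_self i)
    exact hmul q (f j) (hbase j) (L i) hLiΔ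
  · intro c hc
    simp only [dualSpace, Submodule.mem_iInf, LinearMap.mem_ker]
    intro g hg
    exact hideal g hg c hc
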